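/- (Two adjacent blocks in the large blocks scenario behave as if independent.) Let X = (X_j)_{j∈ℤ} be a stationary ℝ^d-valued sequence that is m-dependent for some m ∈ ℕ. Let (u_n) be thresholds with u_n → ∞, w_n = P(‖X_0‖ > u_n) > 0, and (r_n) positive integers with r_n → ∞, r_n w_n → 0 and r_n^2 w_n → ∞. Let A_1 = {max_{1 ≤ i ≤ r_n} ‖X_i‖ > u_n} and A_2 = {max_{r_n+1 ≤ i ≤ 2r_n} ‖X_i‖ > u_n}. Then limsup_{n→∞} P(A_1 ∩ A_2)/(r_n^2 w_n^2) < ∞. -/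

import Mathlib

open MeasureTheory Filter ProbabilityTheory
open scoped ENNReal

theorem stmt_14
    {Ω : Type*} [MeasurableSpace Ω] (P : Measure Ω) [IsProbabilityMeasure P]
    (d : ℕ) (X : ℤ → Ω → (Fin d → ℝ)) (hmeas : ∀ j, Measurable (X j))
    (hstat : ∀ k : ℤ,
      Measure.map (fun ω (j : ℤ) => X (j + k) ω) P
        = Measure.map (fun ω (j : ℤ) => X j ω) P)
    (m : ℕ)
    (hmdep : ∀ k : ℤ,
      Indep (⨆ j ≤ k, MeasurableSpace.comap (X j) inferInstance)
            (⨆ j ≥ k + (m : ℤ) + 1, MeasurableSpace.comap (X j) inferInstance) P)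
    (u : ℕ → ℝ) (hu : Tendsto u atTop atTop)
    (w : ℕ → ℝ) (hw : ∀ n, w n = (P {ω | ‖X 0 ω‖ > u n}).toReal)
    (hwpos : ∀ n, 0 < w n)
    (r : ℕ → ℕ) (hrpos : ∀ n, 0 < r n)
    (hr : Tendsto (fun n => (r n : ℝ)) atTop atTop)
    (hrw : Tendsto (fun n => (r n : ℝ) * w n) atTop (nhds 0))
    (hlarge : Tendsto (fun n => (r n : ℝ) ^ 2 * w n) atTop atTop) :
    Filter.IsBoundedUnder (· ≤ ·) atTop (fun n =>
      (P ({ω | ∃ i : ℤ, 1 ≤ i ∧ i ≤ (r n : ℤ) ∧ ‖X i ω‖ > u n} ∩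
          {ω | ∃ i : ℤ, (r n : ℤ) + 1 ≤ i ∧ i ≤ 2 * (r n : ℤ) ∧ ‖X i ω‖ > u n})).toReal
        / ((r n : ℝ) ^ 2 * w n ^ 2)) := by
  -- basic objects
  set S : ℕ → Set (Fin d → ℝ) := fun n => {v | ‖v‖ > u n} with hS
  have hSmeas : ∀ n, MeasurableSet (S n) :=
    fun n => measurableSet_lt measurable_const measurable_norm
  set B : ℤ → ℕ → Set Ω := fun i n => X i ⁻¹' S n with hB
  have hBmeas : ∀ i n, MeasurableSet (B i n) := fun i n => hmeas i (hSmeas n)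
  -- marginal stationarity: P (B i n) = P (B 0 n)
  have hmarg : ∀ (i : ℤ) (n : ℕ), P (B i n) = P (B 0 n) := by
    intro i n
    have hF : Measurable (fun ω (j : ℤ) => X j ω) :=
      measurable_pi_lambda _ (fun j => hmeas j)
    have hFk : Measurable (fun ω (j : ℤ) => X (j + i) ω) :=
      measurable_pi_lambda _ (fun j => hmeas (j + i))
    have hEv : Measurable (fun f : ℤ → Fin d → ℝ => f 0) := measurable_pi_apply 0
    have e1 : B i n = (fun ω (j : ℤ) => X (j + i) ω) ⁻¹'
        ((fun f : ℤ → Fin d → ℝ => f 0) ⁻¹' S n) := by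
      ext ω; simp [hB, zero_add]
    have e2 : B 0 n = (fun ω (j : ℤ) => X j ω) ⁻¹'
        ((fun f : ℤ → Fin d → ℝ => f 0) ⁻¹' S n) := by
      ext ω; simp [hB]
    rw [e1, e2, ← Measure.map_apply hFk (hEv (hSmeas n)),
      ← Measure.map_apply hF (hEv (hSmeas n)), hstat i]
  -- events as finite unions
  have hA1 : ∀ n, {ω | ∃ i : ℤ, 1 ≤ i ∧ i ≤ (r n : ℤ) ∧ ‖X i ω‖ > u n}
      = ⋃ i ∈ Finset.Icc (1 : ℤ) (r n), B i n := by
    intro n; ext ω; simp [hB, hS, Finset.mem_Icc, and_assoc]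
  -- union bound over an interval
  have hub : ∀ (a b : ℤ) (n : ℕ),
      P (⋃ i ∈ Finset.Icc a b, B i n) ≤ (Finset.Icc a b).card * P (B 0 n) := by
    intro a b n
    calc P (⋃ i ∈ Finset.Icc a b, B i n) ≤ ∑ i ∈ Finset.Icc a b, P (B i n) :=
          measure_biUnion_finset_le _ _
      _ = (Finset.Icc a b).card * P (B 0 n) := by
          simp [hmarg, Finset.sum_const, nsmul_eq_mul]
  -- main estimate for each n
  have key : ∀ n,
      (P ({ω | ∃ i : ℤ, 1 ≤ i ∧ i ≤ (r n : ℤ) ∧ ‖X i ω‖ > u n} ∩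
          {ω | ∃ i : ℤ, (r n : ℤ) + 1 ≤ i ∧ i ≤ 2 * (r n : ℤ) ∧ ‖X i ω‖ > u n})).toReal
        ≤ ((r n : ℝ) * w n) ^ 2 + m * w n := by
    intro n
    set A1 : Set Ω := ⋃ i ∈ Finset.Icc (1 : ℤ) (r n), B i n with hA1def
    set Afar : Set Ω := ⋃ i ∈ Finset.Icc ((r n : ℤ) + m + 1) (2 * (r n : ℤ)), B i n
    set Anear : Set Ω := ⋃ i ∈ Finset.Icc ((r n : ℤ) + 1) ((r n : ℤ) + m), B i n
    have hA2sub : {ω | ∃ i : ℤ, (r n : ℤ) + 1 ≤ i ∧ i ≤ 2 * (r n : ℤ) ∧ ‖X i ω‖ > u n}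
        ⊆ Afar ∪ Anear := by
      rintro ω ⟨i, h1, h2, h3⟩
      by_cases hc : i ≤ (r n : ℤ) + m
      · right
        simp only [Anear, Set.mem_iUnion, Finset.mem_Icc]
        exact ⟨i, ⟨h1, hc⟩, h3⟩
      · left
        simp only [Afar, Set.mem_iUnion, Finset.mem_Icc]
        exact ⟨i, ⟨by omega, h2⟩, h3⟩
    -- independence: A1 and Afar
    have hindep : P (A1 ∩ Afar) = P A1 * P Afar := by
      have h := (Indep_iff _ _ P).mp (hmdep (r n))
      apply h
      · refine MeasurableSet.biUnion (Finset.Icc (1:ℤ) (r n)).countable_toSet ?_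
        intro i hi
        have hi' : i ∈ Finset.Icc (1:ℤ) (r n) := hi
        rw [Finset.mem_Icc] at hi'
        replace hi := hi'
        exact (le_iSup₂ (f := fun (j : ℤ) (_ : j ≤ (r n : ℤ)) =>
          MeasurableSpace.comap (X j) inferInstance) i hi.2) _ ⟨S n, hSmeas n, rfl⟩
      · refine MeasurableSet.biUnion (Finset.Icc ((r n : ℤ)+m+1) (2*(r n : ℤ))).countable_toSet ?_
        intro i hi
        have hi' : i ∈ Finset.Icc ((r n : ℤ)+m+1) (2*(r n:ℤ)) := hi
        rw [Finset.mem_Icc] at hi'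
        replace hi := hi'
        exact (le_iSup₂ (f := fun (j : ℤ) (_ : j ≥ (r n : ℤ) + m + 1) =>
          MeasurableSpace.comap (X j) inferInstance) i hi.1) _ ⟨S n, hSmeas n, rfl⟩
    -- ENNReal bound
    have hwE : P (B 0 n) = ENNReal.ofReal (w n) := by
      rw [hw n, ENNReal.ofReal_toReal (measure_ne_top P _)]
      rfl
    have hEbound : P ({ω | ∃ i : ℤ, 1 ≤ i ∧ i ≤ (r n : ℤ) ∧ ‖X i ω‖ > u n} ∩
          {ω | ∃ i : ℤ, (r n : ℤ) + 1 ≤ i ∧ i ≤ 2 * (r n : ℤ) ∧ ‖X i ω‖ > u n})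
        ≤ ((r n : ℝ≥0∞) * P (B 0 n)) * ((r n : ℝ≥0∞) * P (B 0 n)) + m * P (B 0 n) := by
      rw [hA1 n]
      calc P (A1 ∩ {ω | ∃ i : ℤ, (r n : ℤ) + 1 ≤ i ∧ i ≤ 2 * (r n : ℤ) ∧ ‖X i ω‖ > u n})
          ≤ P ((A1 ∩ Afar) ∪ Anear) := by
            apply measure_mono
            rintro ω ⟨hω1, hω2⟩
            rcases hA2sub hω2 with h | h
            · exact Or.inl ⟨hω1, h⟩
            · exact Or.inr h
        _ ≤ P (A1 ∩ Afar) + P Anear := measure_union_le _ _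
        _ = P A1 * P Afar + P Anear := by rw [hindep]
        _ ≤ ((r n : ℝ≥0∞) * P (B 0 n)) * ((r n : ℝ≥0∞) * P (B 0 n)) + m * P (B 0 n) := by
            gcongr
            · calc P A1 ≤ (Finset.Icc (1:ℤ) (r n)).card * P (B 0 n) := hub _ _ n
                _ ≤ (r n : ℝ≥0∞) * P (B 0 n) := by
                    gcongr
                    rw [Int.card_Icc]
                    simp
            · calc P Afar ≤ (Finset.Icc ((r n : ℤ)+m+1) (2*(r n:ℤ))).card * P (B 0 n) :=
                    hub _ _ n
                _ ≤ (r n : ℝ≥0∞) * P (B 0 n) := by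
                    gcongr
                    rw [Int.card_Icc]
                    exact Nat.cast_le.mpr (Int.toNat_le.mpr (by push_cast; omega))
            · calc P Anear ≤ (Finset.Icc ((r n : ℤ)+1) ((r n:ℤ)+m)).card * P (B 0 n) :=
                    hub _ _ n
                _ ≤ (m : ℝ≥0∞) * P (B 0 n) := by
                    gcongr
                    rw [Int.card_Icc]
                    exact Nat.cast_le.mpr (Int.toNat_le.mpr (by push_cast; omega))
    -- pass to toReal
    have hfin : ((r n : ℝ≥0∞) * P (B 0 n)) * ((r n : ℝ≥0∞) * P (B 0 n)) + m * P (B 0 n) ≠ ⊤ := by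
      have := measure_ne_top P (B 0 n)
      finiteness
    calc (P _).toReal ≤ (((r n : ℝ≥0∞) * P (B 0 n)) * ((r n : ℝ≥0∞) * P (B 0 n))
          + (m : ℝ≥0∞) * P (B 0 n)).toReal := ENNReal.toReal_mono hfin hEbound
      _ = ((r n : ℝ) * w n) ^ 2 + m * w n := by
          have hPw : (P (B 0 n)).toReal = w n := by rw [hw n]; rfl
          rw [ENNReal.toReal_add (by have := measure_ne_top P (B 0 n); finiteness)
            (by have := measure_ne_top P (B 0 n); finiteness),
            ENNReal.toReal_mul, ENNReal.toReal_mul, ENNReal.toReal_mul, hPw]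
          simp only [ENNReal.toReal_natCast]
          push_cast
          ring
  -- conclude boundedness
  apply Filter.isBoundedUnder_of_eventually_le (a := (2:ℝ))
  have hev : ∀ᶠ n in atTop, (m : ℝ) ≤ (r n : ℝ) ^ 2 * w n := hlarge.eventually_ge_atTop _
  filter_upwards [hev] with n hn
  have hc : (0:ℝ) < (r n : ℝ) ^ 2 * w n ^ 2 := by
    have h1 : (0:ℝ) < (r n : ℝ) := by exact_mod_cast hrpos n
    have h2 := hwpos n
    positivity
  have hc2 : (0:ℝ) < (r n : ℝ) ^ 2 * w n := by
    have h1 : (0:ℝ) < (r n : ℝ) := by exact_mod_cast hrpos n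
    have h2 := hwpos n
    positivity
  calc (P _).toReal / ((r n : ℝ) ^ 2 * w n ^ 2)
      ≤ (((r n : ℝ) * w n) ^ 2 + m * w n) / ((r n : ℝ) ^ 2 * w n ^ 2) := by
        gcongr
        exact key n
    _ = 1 + (m : ℝ) / ((r n : ℝ) ^ 2 * w n) := by
        have hw0 : w n ≠ 0 := (hwpos n).ne'
        have hr0 : (r n : ℝ) ≠ 0 := by exact_mod_cast (hrpos n).ne'
        field_simp
    _ ≤ 1 + 1 := by
        gcongr
        rw [div_le_one hc2]
        exact hn
    _ = 2 := by norm_num
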